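/- Let N₅ be the pentagon lattice {0, b, a, c, 1} with 0 < b < a < 1, 0 < c < 1, and c incomparable to a and b. Then the regular open algebra B(N₅) of X_{N₅} has exactly 8 elements and is generated as a Boolean algebra by the image of the canonical embedding e : N₅ → B(N₅); in particular B(N₅) coincides with the Boolean subalgebra generated by e[N₅]. -/

import Mathlib

/-- The pentagon lattice `N₅ = {0, b, a, c, 1}` with `0 < b < a < 1`,
`0 < c < 1`, and `c` incomparable to `a` and `b`. -/
inductive N5 : Type
  | z | b | a | c | o
deriving DecidableEq

instance : Fintype N5 :=
  ⟨{N5.z, N5.b, N5.a, N5.c, N5.o}, fun x => by cases x <;> decide⟩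

/-- The order of `N₅`: `x ≤ y` iff `x = y`, or `x = 0`, or `y = 1`,
or `(x,y) = (b,a)`. -/
def N5.le (x y : N5) : Prop :=
  x = y ∨ x = N5.z ∨ y = N5.o ∨ (x = N5.b ∧ y = N5.a)

instance : DecidableRel N5.le := fun x y =>
  inferInstanceAs (Decidable (x = y ∨ x = N5.z ∨ y = N5.o ∨ (x = N5.b ∧ y = N5.a)))

theorem N5.le_refl : ∀ x : N5, N5.le x x := by decide
theorem N5.le_trans : ∀ x y w : N5, N5.le x y → N5.le y w → N5.le x w := by decide
theorem N5.le_antisymm : ∀ x y : N5, N5.le x y → N5.le y x → x = y := by decide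

instance : PartialOrder N5 where
  le := N5.le
  le_refl := N5.le_refl
  le_trans := N5.le_trans
  le_antisymm := N5.le_antisymm

instance : DecidableRel ((· ≤ ·) : N5 → N5 → Prop) := fun x y =>
  inferInstanceAs (Decidable (N5.le x y))

/-- The poset `X_{N₅} = {(x,y) ∈ N₅ × N₅ | x ≰ y}` with
`(x,y) ⊑ (x',y') ↔ x ≤ x' ∧ y' ≤ y`. -/
def XN5 : Type := {p : N5 × N5 // ¬ p.1 ≤ p.2}

def XN5.mk (p : N5 × N5) (h : ¬ p.1 ≤ p.2) : XN5 := ⟨p, h⟩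

def XN5.val (x : XN5) : N5 × N5 := Subtype.val x

instance : PartialOrder XN5 where
  le x y := x.val.1 ≤ y.val.1 ∧ y.val.2 ≤ x.val.2
  le_refl x := ⟨le_refl _, le_refl _⟩
  le_trans x y z h h' := ⟨h.1.trans h'.1, h'.2.trans h.2⟩
  le_antisymm x y h h' :=
    Subtype.ext (Prod.ext (le_antisymm h.1 h'.1) (le_antisymm h'.2 h.2))

/-- Interior in the downset topology: `□U = {x | ↓x ⊆ U}`. -/
def box (U : Set XN5) : Set XN5 := {x | ∀ y, y ≤ x → y ∈ U}

/-- Closure in the downset topology: `◇U = {x | ↓x ∩ U ≠ ∅}`. -/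
def dia (U : Set XN5) : Set XN5 := {x | ∃ y, y ≤ x ∧ y ∈ U}

/-- The `⊑`-downset of `x` in `X_{N₅}`. -/
def dn (x : XN5) : Set XN5 := {y | y ≤ x}

theorem N5.le_z' : ∀ x : N5, x ≤ N5.z → x = N5.z := by decide

/-- The canonical map `e : N₅ → B(N₅)`, `e x = □◇↓(x,0)` for `x ≠ 0`,
`e 0 = ∅`. -/
def eN5 (x : N5) : Set XN5 :=
  if h : x = N5.z then ∅
  else box (dia (dn (XN5.mk (x, N5.z) (fun hle => h (N5.le_z' x hle)))))

/-- `G` is (the carrier of) a Boolean subalgebra of the regular open algebra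
`B(N₅)`: a family of regular open sets containing `⊥ = ∅` and `⊤ = X_{N₅}`,
closed under meet (intersection), join (`□◇` of union) and complement
(`□` of set complement). -/
def IsBooleanSubalg (G : Set (Set XN5)) : Prop :=
  (∀ W ∈ G, W = box (dia W)) ∧ ∅ ∈ G ∧ Set.univ ∈ G ∧
  (∀ W ∈ G, ∀ V ∈ G, W ∩ V ∈ G) ∧
  (∀ W ∈ G, ∀ V ∈ G, box (dia (W ∪ V)) ∈ G) ∧
  (∀ W ∈ G, box Wᶜ ∈ G)

/-- The Boolean subalgebra of `B(N₅)` generated by the image of `e`. -/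
def genN5 : Set (Set XN5) :=
  ⋂₀ {G | IsBooleanSubalg G ∧ Set.range eN5 ⊆ G}


-- ========== auxiliary development ==========

instance : DecidableEq XN5 :=
  inferInstanceAs (DecidableEq {p : N5 × N5 // ¬ p.1 ≤ p.2})

instance : Fintype XN5 :=
  inferInstanceAs (Fintype {p : N5 × N5 // ¬ p.1 ≤ p.2})

instance : DecidableRel ((· ≤ ·) : XN5 → XN5 → Prop) := fun x y =>
  inferInstanceAs (Decidable (x.val.1 ≤ y.val.1 ∧ y.val.2 ≤ x.val.2))

instance instDecDn (x : XN5) : DecidablePred (· ∈ dn x) := fun y =>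
  inferInstanceAs (Decidable (y ≤ x))

instance instDecBox (U : Set XN5) [DecidablePred (· ∈ U)] :
    DecidablePred (· ∈ box U) := fun x =>
  inferInstanceAs (Decidable (∀ y, y ≤ x → y ∈ U))

instance instDecDia (U : Set XN5) [DecidablePred (· ∈ U)] :
    DecidablePred (· ∈ dia U) := fun x =>
  inferInstanceAs (Decidable (∃ y, y ≤ x ∧ y ∈ U))

instance instDecUnion (U V : Set XN5) [DecidablePred (· ∈ U)] [DecidablePred (· ∈ V)] :
    DecidablePred (· ∈ U ∪ V) := fun x =>
  inferInstanceAs (Decidable (x ∈ U ∨ x ∈ V))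

instance instDecCompl (U : Set XN5) [DecidablePred (· ∈ U)] :
    DecidablePred (· ∈ Uᶜ) := fun x =>
  inferInstanceAs (Decidable (¬ x ∈ U))

instance instDecSetEq (U V : Set XN5) [DecidablePred (· ∈ U)] [DecidablePred (· ∈ V)] :
    Decidable (U = V) :=
  decidable_of_iff (∀ x, x ∈ U ↔ x ∈ V) Set.ext_iff.symm

/-- The three minimal elements of `X_{N₅}`. -/
def m1 : XN5 := ⟨(N5.b, N5.c), by decide⟩
def m2 : XN5 := ⟨(N5.a, N5.b), by decide⟩
def m3 : XN5 := ⟨(N5.c, N5.a), by decide⟩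

/-- selection of up-sets of minimal elements -/
def sel (v : Bool × Bool × Bool) : Set XN5 :=
  {x | (v.1 = true ∧ m1 ≤ x) ∨ (v.2.1 = true ∧ m2 ≤ x) ∨ (v.2.2 = true ∧ m3 ≤ x)}

instance instDecSel (v : Bool × Bool × Bool) : DecidablePred (· ∈ sel v) := fun x =>
  inferInstanceAs
    (Decidable ((v.1 = true ∧ m1 ≤ x) ∨ (v.2.1 = true ∧ m2 ≤ x) ∨ (v.2.2 = true ∧ m3 ≤ x)))

def R (v : Bool × Bool × Bool) : Set XN5 := box (sel v)

instance instDecR (v : Bool × Bool × Bool) : DecidablePred (· ∈ R v) := fun x =>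
  inferInstanceAs (Decidable (x ∈ box (sel v)))

lemma min_below : ∀ x : XN5, m1 ≤ x ∨ m2 ≤ x ∨ m3 ≤ x := by decide

lemma box_subset (U : Set XN5) : box U ⊆ U := fun x hx => hx x (le_refl x)

lemma box_mono {U V : Set XN5} (h : U ⊆ V) : box U ⊆ box V :=
  fun x hx y hy => h (hx y hy)

lemma dia_mono {U V : Set XN5} (h : U ⊆ V) : dia U ⊆ dia V :=
  fun _x ⟨y, hy, hyU⟩ => ⟨y, hy, h hyU⟩

lemma dia_dia (U : Set XN5) : dia (dia U) ⊆ dia U :=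
  fun _x ⟨y, hy, z, hz, hzU⟩ => ⟨z, hz.trans hy, hzU⟩

/-- box of anything is a downset -/
lemma box_lower (U : Set XN5) {x y : XN5} (hx : x ∈ box U) (h : y ≤ x) :
    y ∈ box U := fun z hz => hx z (hz.trans h)

/-- A downset is contained in box dia of itself. -/
lemma lower_subset_boxdia (U : Set XN5)
    (hU : ∀ ⦃x⦄, x ∈ U → ∀ ⦃y⦄, y ≤ x → y ∈ U) : U ⊆ box (dia U) :=
  fun x hx y hy => ⟨y, le_refl y, hU hx hy⟩

/-- box dia is idempotent. -/
lemma boxdia_idem (U : Set XN5) : box (dia (box (dia U))) = box (dia U) := by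
  apply Set.Subset.antisymm
  · exact (box_mono ((dia_mono (box_subset _)).trans (dia_dia _))).trans
      (le_refl (box (dia U)))
  · exact lower_subset_boxdia _ (fun x hx y hy => box_lower _ hx hy)

lemma regular_open_lower {U : Set XN5} (hU : U = box (dia U)) :
    ∀ ⦃x⦄, x ∈ U → ∀ ⦃y⦄, y ≤ x → y ∈ U := by
  intro x hx y hy
  rw [hU] at hx ⊢
  exact box_lower _ hx hy

lemma key (U : Set XN5) (hU : U = box (dia U)) (v : Bool × Bool × Bool)
    (h1 : m1 ∈ U ↔ v.1 = true) (h2 : m2 ∈ U ↔ v.2.1 = true)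
    (h3 : m3 ∈ U ↔ v.2.2 = true) : U = R v := by
  have hlow := regular_open_lower hU
  have hsel : dia U = sel v := by
    ext x
    constructor
    · rintro ⟨y, hyx, hyU⟩
      rcases min_below y with h | h | h
      · exact Or.inl ⟨h1.mp (hlow hyU h), h.trans hyx⟩
      · exact Or.inr (Or.inl ⟨h2.mp (hlow hyU h), h.trans hyx⟩)
      · exact Or.inr (Or.inr ⟨h3.mp (hlow hyU h), h.trans hyx⟩)
    · rintro (⟨hv, hle⟩ | ⟨hv, hle⟩ | ⟨hv, hle⟩)
      · exact ⟨m1, hle, h1.mpr hv⟩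
      · exact ⟨m2, hle, h2.mpr hv⟩
      · exact ⟨m3, hle, h3.mpr hv⟩
  rw [hU, hsel]; rfl

lemma classify (U : Set XN5) (hU : U = box (dia U)) : ∃ v, U = R v := by
  by_cases h1 : m1 ∈ U <;> by_cases h2 : m2 ∈ U <;> by_cases h3 : m3 ∈ U
  · exact ⟨(true, true, true), key U hU _ (by simp [h1]) (by simp [h2]) (by simp [h3])⟩
  · exact ⟨(true, true, false), key U hU _ (by simp [h1]) (by simp [h2]) (by simp [h3])⟩
  · exact ⟨(true, false, true), key U hU _ (by simp [h1]) (by simp [h2]) (by simp [h3])⟩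
  · exact ⟨(true, false, false), key U hU _ (by simp [h1]) (by simp [h2]) (by simp [h3])⟩
  · exact ⟨(false, true, true), key U hU _ (by simp [h1]) (by simp [h2]) (by simp [h3])⟩
  · exact ⟨(false, true, false), key U hU _ (by simp [h1]) (by simp [h2]) (by simp [h3])⟩
  · exact ⟨(false, false, true), key U hU _ (by simp [h1]) (by simp [h2]) (by simp [h3])⟩
  · exact ⟨(false, false, false), key U hU _ (by simp [h1]) (by simp [h2]) (by simp [h3])⟩

lemma R_fix : ∀ v : Bool × Bool × Bool, R v = box (dia (R v)) := by decide

lemma R_inj' : ∀ v w : Bool × Bool × Bool, R v = R w → v = w := by decide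

lemma roa_eq_range : {U : Set XN5 | U = box (dia U)} = Set.range R := by
  ext U
  constructor
  · intro hU
    obtain ⟨v, hv⟩ := classify U hU
    exact ⟨v, hv.symm⟩
  · rintro ⟨v, rfl⟩
    exact R_fix v

lemma empty_fix : (∅ : Set XN5) = box (dia ∅) := by
  apply Set.Subset.antisymm (Set.empty_subset _)
  intro x hx
  obtain ⟨y, _, hy⟩ := box_subset _ hx
  exact hy.elim

lemma univ_fix : (Set.univ : Set XN5) = box (dia Set.univ) := by
  apply Set.Subset.antisymm _ (Set.subset_univ _)
  exact fun x _ y hy => ⟨y, le_refl y, trivial⟩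

lemma inter_fix {W V : Set XN5} (hW : W = box (dia W)) (hV : V = box (dia V)) :
    W ∩ V = box (dia (W ∩ V)) := by
  apply Set.Subset.antisymm
  · apply lower_subset_boxdia
    intro x hx y hy
    exact ⟨regular_open_lower hW hx.1 hy, regular_open_lower hV hx.2 hy⟩
  · intro x hx
    constructor
    · rw [hW]; exact box_mono (dia_mono Set.inter_subset_left) hx
    · rw [hV]; exact box_mono (dia_mono Set.inter_subset_right) hx

lemma compl_fix {W : Set XN5} (hW : W = box (dia W)) :
    box Wᶜ = box (dia (box Wᶜ)) := by
  apply Set.Subset.antisymm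
  · exact lower_subset_boxdia _ (fun x hx y hy => box_lower _ hx hy)
  · apply box_mono
    rintro x ⟨y, hyx, hy⟩
    intro hxW
    exact box_subset _ hy (regular_open_lower hW hxW hyx)

lemma eN5_eq (x : N5) (h : ¬ x = N5.z) :
    eN5 x = box (dia (dn (XN5.mk (x, N5.z) (fun hle => h (N5.le_z' x hle))))) :=
  dif_neg h

lemma eN5_z : eN5 N5.z = ∅ := dif_pos rfl

lemma roa_subalg : IsBooleanSubalg {U : Set XN5 | U = box (dia U)} := by
  refine ⟨fun W hW => hW, empty_fix, univ_fix, ?_, ?_, ?_⟩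
  · exact fun W hW V hV => inter_fix hW hV
  · exact fun W _ V _ => (boxdia_idem (W ∪ V)).symm
  · exact fun W hW => compl_fix hW

lemma range_subset_roa : Set.range eN5 ⊆ {U : Set XN5 | U = box (dia U)} := by
  rintro _ ⟨x, rfl⟩
  by_cases h : x = N5.z
  · subst h; rw [eN5_z]; exact empty_fix
  · rw [eN5_eq x h]; exact (boxdia_idem _).symm

lemma eN5_b : eN5 N5.b = R (true, false, false) := by
  rw [eN5_eq N5.b (by decide)]; decide

lemma eN5_a : eN5 N5.a = R (true, true, false) := by
  rw [eN5_eq N5.a (by decide)]; decide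

lemma eN5_c : eN5 N5.c = R (false, false, true) := by
  rw [eN5_eq N5.c (by decide)]; decide

lemma R_fff : R (false, false, false) = ∅ := by decide
lemma R_ttt : R (true, true, true) = Set.univ := by decide
lemma R_tft : R (true, false, true) =
    box (dia (R (true, false, false) ∪ R (false, false, true))) := by decide
lemma R_ftt : R (false, true, true) = box (R (true, false, false))ᶜ := by decide
lemma R_ftf : R (false, true, false) =
    box (box (dia (R (true, false, false) ∪ R (false, false, true))))ᶜ := by decide

lemma R_mem_gen : ∀ v : Bool × Bool × Bool, R v ∈ genN5 := by
  intro v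
  rw [genN5, Set.mem_sInter]
  intro G hG
  rw [Set.mem_setOf_eq] at hG
  obtain ⟨hBA, hrange⟩ := hG
  unfold IsBooleanSubalg at hBA
  obtain ⟨_, hemp, huniv, _, hjoin, hcompl⟩ := hBA
  have hb : R (true, false, false) ∈ G := by rw [← eN5_b]; exact hrange ⟨N5.b, rfl⟩
  have ha : R (true, true, false) ∈ G := by rw [← eN5_a]; exact hrange ⟨N5.a, rfl⟩
  have hc : R (false, false, true) ∈ G := by rw [← eN5_c]; exact hrange ⟨N5.c, rfl⟩
  have hbc : box (dia (R (true, false, false) ∪ R (false, false, true))) ∈ G :=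
    hjoin _ hb _ hc
  obtain ⟨b1, b2, b3⟩ := v
  cases b1 <;> cases b2 <;> cases b3
  · rw [R_fff]; exact hemp
  · exact hc
  · rw [R_ftf]; exact hcompl _ hbc
  · rw [R_ftt]; exact hcompl _ hb
  · exact hb
  · rw [R_tft]; exact hbc
  · exact ha
  · rw [R_ttt]; exact huniv

-- ========== end auxiliary development ==========

/-- the regular open algebra `B(N₅)` has exactly 8 elements and
coincides with the Boolean subalgebra generated by the image of the canonical
embedding `e : N₅ → B(N₅)`. -/
theorem N5_regular_open_algebra :
    Set.ncard {U : Set XN5 | U = box (dia U)} = 8 ∧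
    genN5 = {U : Set XN5 | U = box (dia U)} := by
  constructor
  · rw [roa_eq_range, ← Set.image_univ, Set.ncard_image_of_injective _ (fun v w h => R_inj' v w h),
      Set.ncard_univ, Nat.card_eq_fintype_card]
    rfl
  · apply Set.Subset.antisymm
    · intro U hU
      rw [genN5, Set.mem_sInter] at hU
      refine hU _ ?_
      rw [Set.mem_setOf_eq]
      exact ⟨roa_subalg, range_subset_roa⟩
    · intro U hU
      obtain ⟨v, rfl⟩ := classify U hU
      exact R_mem_gen v
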